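/- Let ρ^{XAB} = Σ_x p(x)|x⟩⟨x| ⊗ ρ_x^{AB} be a cq state and let σ^{XAB} = Σ_x q(x)|x⟩⟨x| ⊗ σ_x^A ⊗ σ_x^B, where q is a probability mass function on the same alphabet and σ_x^A, σ_x^B are states, with supp(ρ^{XAB}) ⊆ supp(σ^{XAB}). Then for every ε ∈ (0,1) there exists a state ρ'^{XAB} ∈ B^ε(ρ^{XAB}) of the form Σ_x p'(x)|x⟩⟨x| ⊗ ρ'^{AB}_x (classical on X), with ρ'^A_x = Tr_B ρ'^{AB}_x, such that D_max( ρ'^{XAB} ‖ Σ_x p'(x)|x⟩⟨x| ⊗ ρ'^A_x ⊗ σ_x^B ) ≤ D_max( ρ^{XAB} ‖ σ^{XAB} ) + log₂( 1/(1−√(1−ε²)) + 1 ). -/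

import Mathlib

set_option maxHeartbeats 1600000
set_option linter.unusedSectionVars false
set_option linter.unusedTactic false
set_option linter.unreachableTactic false


open scoped Matrix Kronecker BigOperators
open Matrix
open scoped ComplexOrder Classical

namespace Paper

/-- Total positive semidefinite square root (junk value `0` off the PSD cone). -/
noncomputable def psqrt {n : Type*} [Fintype n] [DecidableEq n] (A : Matrix n n ℂ) :
    Matrix n n ℂ :=
  if h : A.PosSemidef then
    (h.1.eigenvectorUnitary : Matrix n n ℂ) *
      Matrix.diagonal ((↑) ∘ (fun x : ℝ => Real.sqrt x) ∘ h.1.eigenvalues) *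
      (star (h.1.eigenvectorUnitary : Matrix n n ℂ))
  else 0

/-- Trace norm `‖A‖₁ = Tr √(AᴴA)`. -/
noncomputable def traceNorm {n : Type*} [Fintype n] [DecidableEq n] (A : Matrix n n ℂ) : ℝ :=
  (psqrt (Aᴴ * A)).trace.re

/-- Fidelity `F(ρ,σ) = ‖√ρ√σ‖₁` of positive semidefinite matrices. -/
noncomputable def fidelity {n : Type*} [Fintype n] [DecidableEq n] (ρ σ : Matrix n n ℂ) : ℝ :=
  traceNorm (psqrt ρ * psqrt σ)

/-- Purified distance `P(ρ,σ) = √(1 - F(ρ,σ)²)`. -/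
noncomputable def purDist {n : Type*} [Fintype n] [DecidableEq n] (ρ σ : Matrix n n ℂ) : ℝ :=
  Real.sqrt (1 - fidelity ρ σ ^ 2)

/-- A state (density matrix): positive semidefinite with unit trace. -/
def IsState {n : Type*} [Fintype n] (ρ : Matrix n n ℂ) : Prop :=
  ρ.PosSemidef ∧ ρ.trace = 1

/-- A probability mass function on a finite alphabet. -/
def IsPMF {X : Type*} [Fintype X] (p : X → ℝ) : Prop :=
  (∀ x, 0 ≤ p x) ∧ ∑ x, p x = 1

/-- Support inclusion `supp ρ ⊆ supp σ`, phrased via kernels (equivalent for PSD matrices). -/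
def SuppSubset {n : Type*} [Fintype n] (ρ σ : Matrix n n ℂ) : Prop :=
  ∀ v : n → ℂ, σ.mulVec v = 0 → ρ.mulVec v = 0

/-- Loewner order `A ≤ B`. -/
def LLE {n : Type*} [Fintype n] (A B : Matrix n n ℂ) : Prop := (B - A).PosSemidef

/-- Binary logarithm of a Hermitian matrix, taken on its support via functional calculus
(`Real.logb 2 0 = 0` takes care of the kernel). -/
noncomputable def matLog {n : Type*} [Fintype n] [DecidableEq n] (A : Matrix n n ℂ) :
    Matrix n n ℂ :=
  if hA : A.IsHermitian then
    (hA.eigenvectorUnitary : Matrix n n ℂ) *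
      Matrix.diagonal (fun i => (Real.logb 2 (hA.eigenvalues i) : ℂ)) *
      (star (hA.eigenvectorUnitary : Matrix n n ℂ))
  else 0

/-- Quantum relative entropy (base 2): `D(ρ‖σ) = Tr(ρ log₂ ρ) - Tr(ρ log₂ σ)`. -/
noncomputable def relEnt {n : Type*} [Fintype n] [DecidableEq n] (ρ σ : Matrix n n ℂ) : ℝ :=
  ((ρ * matLog ρ).trace - (ρ * matLog σ).trace).re

/-- Max-relative entropy `D_max(ρ‖σ) = inf {λ | ρ ≤ 2^λ σ}`. -/
noncomputable def dMax {n : Type*} [Fintype n] (ρ σ : Matrix n n ℂ) : ℝ :=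
  sInf {l : ℝ | LLE ρ ((2 : ℝ) ^ l • σ)}

/-- Smooth max-relative entropy `D_max^ε(ρ‖σ) = min_{ρ' ∈ B^ε(ρ)} D_max(ρ'‖σ)`. -/
noncomputable def dMaxSmooth {n : Type*} [Fintype n] [DecidableEq n]
    (ε : ℝ) (ρ σ : Matrix n n ℂ) : ℝ :=
  sInf {d : ℝ | ∃ ρ' : Matrix n n ℂ, IsState ρ' ∧ purDist ρ' ρ ≤ ε ∧ d = dMax ρ' σ}

/-- Partial trace over the second (B) factor. -/
noncomputable def ptraceB {a b : Type*} [Fintype b]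
    (M : Matrix (a × b) (a × b) ℂ) : Matrix a a ℂ :=
  Matrix.of fun i j => ∑ k : b, M (i, k) (j, k)

/-- Partial trace over the first (A) factor. -/
noncomputable def ptraceA {a b : Type*} [Fintype a]
    (M : Matrix (a × b) (a × b) ℂ) : Matrix b b ℂ :=
  Matrix.of fun i j => ∑ k : a, M (k, i) (k, j)

/-- The cq state `Σ_x p(x) |x⟩⟨x| ⊗ ρ_x`. -/
noncomputable def cqState {X d : Type*} [Fintype X] [DecidableEq X] [Fintype d] [DecidableEq d]
    (p : X → ℝ) (ρ : X → Matrix d d ℂ) : Matrix (X × d) (X × d) ℂ :=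
  ∑ x, p x • (Matrix.single x x (1 : ℂ) ⊗ₖ ρ x)

/-- The Markov state `ρ^{A-X-B} = Σ_x p(x)|x⟩⟨x| ⊗ ρ_x^A ⊗ ρ_x^B` of a cq state. -/
noncomputable def markovState {X a b : Type*} [Fintype X] [DecidableEq X]
    [Fintype a] [DecidableEq a] [Fintype b] [DecidableEq b]
    (p : X → ℝ) (ρ : X → Matrix (a × b) (a × b) ℂ) :
    Matrix (X × (a × b)) (X × (a × b)) ℂ :=
  cqState p fun x => ptraceB (ρ x) ⊗ₖ ptraceA (ρ x)

/-- Conditional mutual information `I(A;B|X)_ρ = D(ρ^{XAB} ‖ ρ^{A-X-B})` of a cq state. -/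
noncomputable def condMI {X a b : Type*} [Fintype X] [DecidableEq X]
    [Fintype a] [DecidableEq a] [Fintype b] [DecidableEq b]
    (p : X → ℝ) (ρ : X → Matrix (a × b) (a × b) ℂ) : ℝ :=
  relEnt (cqState p ρ) (markovState p ρ)

/-- `D_max^ε(A;B|X)_ρ = D_max^ε(ρ^{XAB} ‖ ρ^{A-X-B})` of a cq state. -/
noncomputable def condDmaxSmooth {X a b : Type*} [Fintype X] [DecidableEq X]
    [Fintype a] [DecidableEq a] [Fintype b] [DecidableEq b]
    (ε : ℝ) (p : X → ℝ) (ρ : X → Matrix (a × b) (a × b) ℂ) : ℝ :=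
  dMaxSmooth ε (cqState p ρ) (markovState p ρ)

/-- `Ĩ_max^ε(A;B|X)_ρ`: minimum of `D_max(ρ' ‖ Σ_x p'(x)|x⟩⟨x| ⊗ ρ'^A_x ⊗ ρ^B_x)` over
cq states `ρ'` in the ε-ball around `ρ^{XAB}`. -/
noncomputable def condImaxTilde {X a b : Type*} [Fintype X] [DecidableEq X]
    [Fintype a] [DecidableEq a] [Fintype b] [DecidableEq b]
    (ε : ℝ) (p : X → ℝ) (ρ : X → Matrix (a × b) (a × b) ℂ) : ℝ :=
  sInf {d : ℝ | ∃ (p' : X → ℝ) (ρ' : X → Matrix (a × b) (a × b) ℂ),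
    IsPMF p' ∧ (∀ x, IsState (ρ' x)) ∧
    purDist (cqState p' ρ') (cqState p ρ) ≤ ε ∧
    d = dMax (cqState p' ρ') (cqState p' fun x => ptraceB (ρ' x) ⊗ₖ ptraceA (ρ x))}

/-- `Ĩ_max^ε(A;B)_ρ = inf_{ρ' ∈ B^ε(ρ)} D_max(ρ' ‖ ρ'^A ⊗ ρ^B)` for a bipartite state. -/
noncomputable def bipImaxTilde {a b : Type*} [Fintype a] [DecidableEq a]
    [Fintype b] [DecidableEq b] (ε : ℝ) (ρ : Matrix (a × b) (a × b) ℂ) : ℝ :=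
  sInf {d : ℝ | ∃ ρ' : Matrix (a × b) (a × b) ℂ, IsState ρ' ∧ purDist ρ' ρ ≤ ε ∧
    d = dMax ρ' (ptraceB ρ' ⊗ₖ ptraceA ρ)}

/-- The binary entropy function. -/
noncomputable def binEnt (ε : ℝ) : ℝ :=
  -(ε * Real.logb 2 ε) - (1 - ε) * Real.logb 2 (1 - ε)

/-- Hypothesis testing relative entropy `D_H^ε(ρ‖σ)`. -/
noncomputable def dH {n : Type*} [Fintype n] [DecidableEq n] (ε : ℝ) (ρ σ : Matrix n n ℂ) : ℝ :=
  sSup {d : ℝ | ∃ Λ : Matrix n n ℂ, Λ.PosSemidef ∧ (1 - Λ).PosSemidef ∧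
    1 - ε ≤ ((Λ * ρ).trace).re ∧ d = -Real.logb 2 (((Λ * σ).trace).re)}

/-- The convex-split state
`τ^{XAB₁…Bₙ} = Σ_x p(x)|x⟩⟨x| ⊗ (1/n) Σ_j ρ_x^{AB_j} ⊗ (⊗_{i≠j} σ_x^{B_i})`,
written entrywise on the index type `X × (A × Bⁿ)`. -/
noncomputable def tauState {X a b : Type*} [Fintype X] [DecidableEq X]
    [Fintype a] [Fintype b]
    (p : X → ℝ) (ρ : X → Matrix (a × b) (a × b) ℂ) (σ : X → Matrix b b ℂ) (nn : ℕ) :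
    Matrix (X × (a × (Fin nn → b))) (X × (a × (Fin nn → b))) ℂ :=
  Matrix.of fun q q' =>
    (if q.1 = q'.1 then (p q.1 : ℂ) else 0) *
      ((nn : ℂ)⁻¹ * ∑ j : Fin nn,
        ρ q.1 (q.2.1, q.2.2 j) (q'.2.1, q'.2.2 j) *
          ∏ i ∈ Finset.univ.erase j, σ q.1 (q.2.2 i) (q'.2.2 i))

/-- The product reference state
`Σ_x p(x)|x⟩⟨x| ⊗ ρ_x^A ⊗ σ_x^{B₁} ⊗ … ⊗ σ_x^{Bₙ}`, entrywise. -/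
noncomputable def refState {X a b : Type*} [Fintype X] [DecidableEq X]
    [Fintype a] [Fintype b]
    (p : X → ℝ) (ρ : X → Matrix (a × b) (a × b) ℂ) (σ : X → Matrix b b ℂ) (nn : ℕ) :
    Matrix (X × (a × (Fin nn → b))) (X × (a × (Fin nn → b))) ℂ :=
  Matrix.of fun q q' =>
    (if q.1 = q'.1 then (p q.1 : ℂ) else 0) *
      (ptraceB (ρ q.1) q.2.1 q'.2.1 * ∏ i : Fin nn, σ q.1 (q.2.2 i) (q'.2.2 i))


section

variable {n : Type*} [Fintype n] [DecidableEq n]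

lemma rsmul_eq (c : ℝ) (M : Matrix n n ℂ) : c • M = (c : ℂ) • M := by
  ext i j; simp [Matrix.smul_apply, Complex.real_smul]

lemma psd_smul_real {c : ℝ} (hc : 0 ≤ c) {M : Matrix n n ℂ} (hM : M.PosSemidef) :
    (c • M).PosSemidef := by
  rw [rsmul_eq]
  refine Matrix.PosSemidef.of_dotProduct_mulVec_nonneg ?_ ?_
  · have := hM.1
    unfold Matrix.IsHermitian at *
    rw [conjTranspose_smul, this]
    congr 1
    simp
  · intro x
    rw [smul_mulVec, dotProduct_smul, smul_eq_mul]
    exact mul_nonneg (by exact_mod_cast hc) (hM.dotProduct_mulVec_nonneg x)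

lemma psd_sum {ι : Type*} (s : Finset ι) (f : ι → Matrix n n ℂ)
    (h : ∀ i ∈ s, (f i).PosSemidef) : (∑ i ∈ s, f i).PosSemidef := by
  classical
  induction s using Finset.induction_on with
  | empty => simpa using Matrix.PosSemidef.zero
  | insert _ _ hx ih =>
    rw [Finset.sum_insert hx]
    exact ((h _ (Finset.mem_insert_self _ _)).add
      (ih fun i hi => h i (Finset.mem_insert_of_mem hi)))

lemma psd_stdBasis (x : n) : (Matrix.single x x (1:ℂ)).PosSemidef := by
  refine Matrix.PosSemidef.of_dotProduct_mulVec_nonneg ?_ ?_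
  · ext i j
    simp [conjTranspose_apply, Matrix.single, and_comm]
  · intro v
    have : (Matrix.single x x (1:ℂ)).mulVec v = fun i => if i = x then v x else 0 := by
      ext i
      simp only [Matrix.mulVec, Matrix.single, dotProduct, Matrix.of_apply]
      rw [Finset.sum_congr rfl (fun y _ => show (if x = i ∧ x = y then (1:ℂ) else 0) * v y
        = if y = x then (if i = x then v x else 0) else 0 by
          by_cases h1 : y = x <;> by_cases h2 : i = x <;>
            subst_eqs <;> simp_all [eq_comm])]
      simp [Finset.sum_ite_eq]
    rw [this, dotProduct]
    rw [show ∑ i, (star v) i * (if i = x then v x else 0)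
        = star (v x) * v x by simp [Finset.sum_ite_eq, Pi.star_apply]]
    exact star_mul_self_nonneg _

end
section


lemma conjT_kron {m n : Type*} [Fintype m] [Fintype n]
    (A : Matrix m m ℂ) (B : Matrix n n ℂ) : (A ⊗ₖ B)ᴴ = Aᴴ ⊗ₖ Bᴴ := by
  ext i j
  simp [conjTranspose_apply, Matrix.kroneckerMap_apply, star_mul']

lemma psd_kron {m n : Type*} [Fintype m] [DecidableEq m] [Fintype n] [DecidableEq n]
    {A : Matrix m m ℂ} {B : Matrix n n ℂ} (hA : A.PosSemidef) (hB : B.PosSemidef) :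
    (A ⊗ₖ B).PosSemidef := by
  exact hA.kronecker hB

lemma psd_ptraceB {a b : Type*} [Fintype a] [Fintype b]
    {M : Matrix (a × b) (a × b) ℂ} (hM : M.PosSemidef) :
    (Matrix.of fun i j => ∑ k : b, M (i, k) (j, k) : Matrix a a ℂ).PosSemidef := by
  refine Matrix.PosSemidef.of_dotProduct_mulVec_nonneg ?_ ?_
  · ext i j
    simp only [conjTranspose_apply, Matrix.of_apply, star_sum]
    refine Finset.sum_congr rfl fun k _ => ?_
    have := congrFun (congrFun hM.1 (i,k)) (j,k)
    simpa [conjTranspose_apply] using this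
  · intro v
    have lhs : star v ⬝ᵥ (Matrix.of fun i j => ∑ k : b, M (i, k) (j, k)).mulVec v
        = ∑ k : b, ∑ i : a, ∑ j : a, star (v i) * (M (i,k) (j,k) * v j) := by
      simp only [dotProduct, Matrix.mulVec, Matrix.of_apply, Pi.star_apply,
        Finset.sum_mul, Finset.mul_sum]
      rw [show (∑ i : a, ∑ j : a, ∑ k : b, star (v i) * (M (i, k) (j, k) * v j))
          = ∑ k : b, ∑ i : a, ∑ j : a, star (v i) * (M (i,k) (j,k) * v j) from
        (Finset.sum_congr rfl fun i _ => Finset.sum_comm).trans Finset.sum_comm]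
    rw [lhs]
    refine Finset.sum_nonneg fun k _ => ?_
    have hq := hM.dotProduct_mulVec_nonneg (fun q : a × b => if q.2 = k then v q.1 else 0)
    have hrw : star (fun q : a × b => if q.2 = k then v q.1 else 0) ⬝ᵥ
        M.mulVec (fun q : a × b => if q.2 = k then v q.1 else 0)
        = ∑ i : a, ∑ j : a, star (v i) * (M (i,k) (j,k) * v j) := by
      simp only [dotProduct, Pi.star_apply]
      rw [Fintype.sum_prod_type]
      have inner : ∀ i : a, ∀ kk : b,
          star (if kk = k then v i else 0) * M.mulVec (fun q : a × b => if q.2 = k then v q.1 else 0) (i, kk)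
          = if kk = k then star (v i) * ∑ j : a, M (i,k) (j,k) * v j else 0 := by
        intro i kk
        by_cases h : kk = k
        · subst h
          simp only [if_true]
          congr 1
          simp only [Matrix.mulVec, dotProduct]
          rw [Fintype.sum_prod_type]
          refine Finset.sum_congr rfl fun j _ => ?_
          simp [Finset.sum_ite_eq', mul_ite]
        · simp [h]
      calc (∑ i : a, ∑ kk : b, star (if kk = k then v i else 0) *
              M.mulVec (fun q : a × b => if q.2 = k then v q.1 else 0) (i, kk))
          = ∑ i : a, ∑ kk : b, (if kk = k then star (v i) * ∑ j : a, M (i,k) (j,k) * v j else 0) :=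
            Finset.sum_congr rfl fun i _ => Finset.sum_congr rfl fun kk _ => inner i kk
        _ = ∑ i : a, star (v i) * ∑ j : a, M (i,k) (j,k) * v j := by
            refine Finset.sum_congr rfl fun i _ => ?_
            simp [Finset.sum_ite_eq']
        _ = ∑ i : a, ∑ j : a, star (v i) * (M (i,k) (j,k) * v j) :=
            Finset.sum_congr rfl fun i _ => Finset.mul_sum _ _ _
    rw [← hrw]
    exact hq

lemma psd_ptraceA {a b : Type*} [Fintype a] [Fintype b]
    {M : Matrix (a × b) (a × b) ℂ} (hM : M.PosSemidef) :
    (Matrix.of fun i j => ∑ k : a, M (k, i) (k, j) : Matrix b b ℂ).PosSemidef := by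
  refine Matrix.PosSemidef.of_dotProduct_mulVec_nonneg ?_ ?_
  · ext i j
    simp only [conjTranspose_apply, Matrix.of_apply, star_sum]
    refine Finset.sum_congr rfl fun k _ => ?_
    have := congrFun (congrFun hM.1 (k,i)) (k,j)
    simpa [conjTranspose_apply] using this
  · intro v
    have lhs : star v ⬝ᵥ (Matrix.of fun i j => ∑ k : a, M (k, i) (k, j)).mulVec v
        = ∑ k : a, ∑ i : b, ∑ j : b, star (v i) * (M (k,i) (k,j) * v j) := by
      simp only [dotProduct, Matrix.mulVec, Matrix.of_apply, Pi.star_apply,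
        Finset.sum_mul, Finset.mul_sum]
      rw [show (∑ i : b, ∑ j : b, ∑ k : a, star (v i) * (M (k, i) (k, j) * v j))
          = ∑ k : a, ∑ i : b, ∑ j : b, star (v i) * (M (k,i) (k,j) * v j) from
        (Finset.sum_congr rfl fun i _ => Finset.sum_comm).trans Finset.sum_comm]
    rw [lhs]
    refine Finset.sum_nonneg fun k _ => ?_
    have hq := hM.dotProduct_mulVec_nonneg (fun q : a × b => if q.1 = k then v q.2 else 0)
    have hrw : star (fun q : a × b => if q.1 = k then v q.2 else 0) ⬝ᵥ
        M.mulVec (fun q : a × b => if q.1 = k then v q.2 else 0)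
        = ∑ i : b, ∑ j : b, star (v i) * (M (k,i) (k,j) * v j) := by
      simp only [dotProduct, Pi.star_apply]
      rw [Fintype.sum_prod_type]
      have inner : ∀ kk : a, ∀ i : b,
          star (if kk = k then v i else 0) *
            M.mulVec (fun q : a × b => if q.1 = k then v q.2 else 0) (kk, i)
          = if kk = k then star (v i) * ∑ j : b, M (k,i) (k,j) * v j else 0 := by
        intro kk i
        by_cases h : kk = k
        · subst h
          simp only [if_true]
          congr 1
          simp only [Matrix.mulVec, dotProduct]
          rw [Fintype.sum_prod_type]
          simp only [mul_ite, mul_zero, ite_mul, zero_mul]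
          rw [Finset.sum_comm]
          simp [Finset.sum_ite_eq']
        · simp [h]
      calc (∑ kk : a, ∑ i : b, star (if kk = k then v i else 0) *
              M.mulVec (fun q : a × b => if q.1 = k then v q.2 else 0) (kk, i))
          = ∑ kk : a, ∑ i : b,
              (if kk = k then star (v i) * ∑ j : b, M (k,i) (k,j) * v j else 0) :=
            Finset.sum_congr rfl fun kk _ => Finset.sum_congr rfl fun i _ => inner kk i
        _ = ∑ i : b, ∑ kk : a,
              (if kk = k then star (v i) * ∑ j : b, M (k,i) (k,j) * v j else 0) :=
            Finset.sum_comm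
        _ = ∑ i : b, star (v i) * ∑ j : b, M (k,i) (k,j) * v j := by
            refine Finset.sum_congr rfl fun i _ => ?_
            simp [Finset.sum_ite_eq']
        _ = ∑ i : b, ∑ j : b, star (v i) * (M (k,i) (k,j) * v j) :=
            Finset.sum_congr rfl fun i _ => Finset.mul_sum _ _ _
    rw [← hrw]
    exact hq

end
section

variable {n : Type*} [Fintype n] [DecidableEq n]

lemma psd_diag_nonneg {M : Matrix n n ℂ} (hM : M.PosSemidef) (i : n) : 0 ≤ M i i := by
  have h := hM.dotProduct_mulVec_nonneg (Pi.single i 1)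
  have : star (Pi.single i 1 : n → ℂ) ⬝ᵥ M.mulVec (Pi.single i 1) = M i i := by
    rw [Matrix.mulVec_single]
    simp [dotProduct, Pi.single_apply, apply_ite, Finset.sum_ite_eq]
  rwa [this] at h

lemma psd_trace_nonneg {M : Matrix n n ℂ} (hM : M.PosSemidef) : 0 ≤ M.trace :=
  Finset.sum_nonneg fun i _ => psd_diag_nonneg hM i

lemma lle_trace_re {A B : Matrix n n ℂ} (h : (B - A).PosSemidef) :
    A.trace.re ≤ B.trace.re := by
  have h1 : 0 ≤ (B - A).trace := psd_trace_nonneg h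
  rw [Matrix.trace_sub] at h1
  have := (Complex.le_def.mp h1).1
  simp only [Complex.zero_re, Complex.sub_re] at this
  linarith

lemma herm_form_real {M : Matrix n n ℂ} (hM : M.IsHermitian) (v : n → ℂ) :
    (starRingEnd ℂ) (star v ⬝ᵥ M.mulVec v) = star v ⬝ᵥ M.mulVec v := by
  have h1 : star (star v ⬝ᵥ M.mulVec v) = star (M.mulVec v) ⬝ᵥ v := by
    rw [← Matrix.star_dotProduct_star, star_star]
  rw [show (starRingEnd ℂ) (star v ⬝ᵥ M.mulVec v) = star (star v ⬝ᵥ M.mulVec v) from rfl, h1,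
    Matrix.star_mulVec, hM]
  rw [← Matrix.dotProduct_mulVec]

lemma psd_of_herm_re {M : Matrix n n ℂ} (hM : M.IsHermitian)
    (h : ∀ v : n → ℂ, 0 ≤ (star v ⬝ᵥ M.mulVec v).re) : M.PosSemidef := by
  refine Matrix.PosSemidef.of_dotProduct_mulVec_nonneg hM fun v => ?_
  have hre := herm_form_real hM v
  rw [Complex.conj_eq_iff_im] at hre
  rw [Complex.le_def]
  exact ⟨by simpa using h v, by simp [hre]⟩

lemma trace_stdBasis (x : n) : (Matrix.single x x (1:ℂ)).trace = 1 :=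
  Matrix.trace_single_eq_same x (1:ℂ)

end
section
open scoped MatrixOrder
variable {n : Type*} [Fintype n] [DecidableEq n]

/-- The eigen-decomposition square root of a positive semidefinite matrix. -/
noncomputable def _root_.Matrix.PosSemidef.sqrt {A : Matrix n n ℂ} (h : A.PosSemidef) :
    Matrix n n ℂ :=
  (h.1.eigenvectorUnitary : Matrix n n ℂ) *
      Matrix.diagonal ((↑) ∘ (fun x : ℝ => Real.sqrt x) ∘ h.1.eigenvalues) *
      (star (h.1.eigenvectorUnitary : Matrix n n ℂ))

lemma _root_.Matrix.PosSemidef.sqrt_eq_cfc {A : Matrix n n ℂ} (h : A.PosSemidef) :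
    h.sqrt = CFC.sqrt A := by
  rw [CFC.sqrt_eq_real_sqrt A h.nonneg, cfcₙ_eq_cfc, h.1.cfc_eq]
  rfl

lemma _root_.Matrix.PosSemidef.posSemidef_sqrt {A : Matrix n n ℂ} (h : A.PosSemidef) :
    h.sqrt.PosSemidef := by
  rw [h.sqrt_eq_cfc]; exact (CFC.sqrt_nonneg A).posSemidef

lemma _root_.Matrix.PosSemidef.sqrt_mul_self {A : Matrix n n ℂ} (h : A.PosSemidef) :
    h.sqrt * h.sqrt = A := by
  rw [h.sqrt_eq_cfc]; exact CFC.sqrt_mul_sqrt_self A h.nonneg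

lemma _root_.Matrix.PosSemidef.eq_sqrt_of_sq_eq {A : Matrix n n ℂ} (hA : A.PosSemidef)
    {B : Matrix n n ℂ} (hB : B.PosSemidef) (hAB : A ^ 2 = B) : A = hB.sqrt := by
  rw [hB.sqrt_eq_cfc]; exact (CFC.sqrt_unique (by rw [← sq]; exact hAB) hA.nonneg).symm

end
section

variable {n : Type*} [Fintype n] [DecidableEq n]

lemma sqrt_mono {A B : Matrix n n ℂ} (hA : A.PosSemidef) (hB : B.PosSemidef)
    (hAB : (B - A).PosSemidef) : (hB.sqrt - hA.sqrt).PosSemidef := by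
  set D : Matrix n n ℂ := hB.sqrt - hA.sqrt with hDdef
  have hD : D.IsHermitian := hB.posSemidef_sqrt.1.sub hA.posSemidef_sqrt.1
  refine (hD.posSemidef_iff_eigenvalues_nonneg).mpr fun i => ?_
  by_contra hneg
  push_neg at hneg
  set c : ℝ := hD.eigenvalues i with hcdef
  have hc : c < 0 := hneg
  set v : n → ℂ := ⇑(hD.eigenvectorBasis i) with hvdef
  have hv : D *ᵥ v = c • v := hD.mulVec_eigenvectorBasis i
  have hvne : v ≠ 0 := by
    intro h
    have := hD.eigenvectorBasis.orthonormal.ne_zero i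
    exact this (by ext x; exact congrFun h x)
  have hdecomp : B - A = hB.sqrt * D + D * hA.sqrt := by
    rw [hDdef, Matrix.mul_sub, Matrix.sub_mul, hB.sqrt_mul_self, hA.sqrt_mul_self]
    abel
  have hq := hAB.dotProduct_mulVec_nonneg v
  rw [hdecomp, Matrix.add_mulVec, dotProduct_add] at hq
  have term1 : star v ⬝ᵥ (hB.sqrt * D) *ᵥ v = (c : ℂ) * (star v ⬝ᵥ hB.sqrt *ᵥ v) := by
    rw [← Matrix.mulVec_mulVec, hv, Matrix.mulVec_smul, dotProduct_smul]
    simp [Complex.real_smul]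
  have term2 : star v ⬝ᵥ (D * hA.sqrt) *ᵥ v = (c : ℂ) * (star v ⬝ᵥ hA.sqrt *ᵥ v) := by
    rw [← Matrix.mulVec_mulVec, Matrix.dotProduct_mulVec]
    have : star v ᵥ* D = c • star v := by
      rw [show star v ᵥ* D = star v ᵥ* Dᴴ by rw [hD], ← Matrix.star_mulVec, hv]
      ext j
      simp [Complex.real_smul]
    rw [this, smul_dotProduct]
    simp [Complex.real_smul]
  rw [term1, term2] at hq
  set qB := star v ⬝ᵥ hB.sqrt *ᵥ v with hqB
  set qA := star v ⬝ᵥ hA.sqrt *ᵥ v with hqA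
  have hqBpos : 0 ≤ qB := hB.posSemidef_sqrt.dotProduct_mulVec_nonneg v
  have hqApos : 0 ≤ qA := hA.posSemidef_sqrt.dotProduct_mulVec_nonneg v
  have hsum : 0 ≤ (c : ℂ) * (qB + qA) := by
    rw [mul_add]; exact hq
  -- deduce qB + qA = 0
  have hs : qB + qA = 0 := by
    have h1 : 0 ≤ qB + qA := add_nonneg hqBpos hqApos
    by_contra hne
    have hlt : 0 < qB + qA := lt_of_le_of_ne h1 (Ne.symm hne)
    have : (c : ℂ) * (qB + qA) < 0 := by
      have hcneg : (c : ℂ) < 0 := by exact_mod_cast hc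
      exact mul_neg_of_neg_of_pos hcneg hlt
    exact absurd (lt_of_le_of_lt hsum this) (lt_irrefl 0)
  have hqB0 : qB = 0 := le_antisymm (by
      calc qB = qB + qA - qA := by ring
        _ ≤ 0 + 0 - 0 := by rw [hs]; simpa using hqApos
        _ = 0 := by ring) hqBpos
  have hqA0 : qA = 0 := by
    have := hs; rw [hqB0, zero_add] at this; exact this
  have hBv : hB.sqrt *ᵥ v = 0 :=
    (hB.posSemidef_sqrt.dotProduct_mulVec_zero_iff v).mp hqB0
  have hAv : hA.sqrt *ᵥ v = 0 :=
    (hA.posSemidef_sqrt.dotProduct_mulVec_zero_iff v).mp hqA0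
  have hDv : D *ᵥ v = 0 := by
    rw [hDdef, Matrix.sub_mulVec, hBv, hAv, sub_zero]
  rw [hv] at hDv
  rcases smul_eq_zero.mp hDv with h | h
  · exact absurd h (ne_of_lt hc)
  · exact hvne h

end
section

variable {n : Type*} [Fintype n] [DecidableEq n]

lemma exists_lle_of_suppSubset {ρ σ : Matrix n n ℂ} (hρ : ρ.PosSemidef) (hσ : σ.PosSemidef)
    (hsupp : ∀ v, σ.mulVec v = 0 → ρ.mulVec v = 0) :
    ∃ c : ℝ, 0 < c ∧ (c • σ - ρ).PosSemidef := by
  set V : Matrix n n ℂ := (hσ.1.eigenvectorUnitary : Matrix n n ℂ) with hVdef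
  have hVV : star V * V = 1 := Unitary.coe_star_mul_self hσ.1.eigenvectorUnitary
  have hVV' : V * star V = 1 := Unitary.coe_mul_star_self hσ.1.eigenvectorUnitary
  set d : n → ℝ := hσ.1.eigenvalues with hddef
  have hd : ∀ i, 0 ≤ d i := hσ.eigenvalues_nonneg
  set Dm : Matrix n n ℂ := Matrix.diagonal (RCLike.ofReal ∘ d) with hDmdef
  have hspec : σ = V * Dm * star V := by
    have := hσ.1.spectral_theorem; rw [Unitary.conjStarAlgAut_apply] at this; exact this
  have hDmd : Dm = Matrix.diagonal (fun i => (d i : ℂ)) := by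
    rw [hDmdef]; rfl
  have hDmH : Dm.IsHermitian := by
    unfold Matrix.IsHermitian
    rw [hDmd, Matrix.diagonal_conjTranspose]
    have hst : star (fun i => (d i : ℂ)) = fun i => (d i : ℂ) := by
      funext i
      simp [Pi.star_apply, Complex.conj_ofReal]
    rw [hst]
  set ρt : Matrix n n ℂ := star V * ρ * V with hρtdef
  have hρt : ρt.PosSemidef := by
    have := hρ.conjTranspose_mul_mul_same (B := V)
    rwa [← Matrix.star_eq_conjTranspose] at this
  have hkill : ∀ i, d i = 0 → (∀ j, ρt i j = 0 ∧ ρt j i = 0) := by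
    intro i hdi
    have hzero : σ.mulVec (V.mulVec (Pi.single i 1)) = 0 := by
      rw [Matrix.mulVec_mulVec, hspec]
      have hstep : V * Dm * star V * V = V * Dm := by
        rw [Matrix.mul_assoc (V * Dm), hVV, Matrix.mul_one]
      rw [hstep, ← Matrix.mulVec_mulVec, Matrix.diagonal_mulVec_single]
      have hz : (Function.comp (RCLike.ofReal : ℝ → ℂ) d) i * 1 = 0 := by
        simp [Function.comp, hdi]
      rw [hz]
      simp
    have hρzero := hsupp _ hzero
    rw [Matrix.mulVec_mulVec] at hρzero
    have hcol : ∀ j, (ρ * V) j i = 0 := by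
      intro j
      have := congrFun hρzero j
      rw [Matrix.mulVec_single] at this
      simpa using this
    have h1 : ∀ j, ρt j i = 0 := by
      intro j
      rw [hρtdef, Matrix.mul_assoc]
      show ∑ k, (star V) j k * (ρ * V) k i = 0
      exact Finset.sum_eq_zero fun k _ => by rw [hcol k, mul_zero]
    intro j
    refine ⟨?_, h1 j⟩
    have h2 : ρt i j = star (ρt j i) := by
      have := congrFun (congrFun hρt.1 i) j
      rw [Matrix.conjTranspose_apply] at this
      exact this.symm
    rw [h2, h1 j, star_zero]
  set T : Finset n := Finset.univ.filter (fun i => d i ≠ 0) with hTdef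
  have hdT : ∀ i ∈ T, 0 < d i := fun i hi => lt_of_le_of_ne (hd i)
    (Ne.symm (by simpa [hTdef] using hi))
  set m : ℝ := if hT : T.Nonempty then T.inf' hT d else 1 with hmdef
  have hm : 0 < m := by
    rw [hmdef]
    split_ifs with hT
    · exact (Finset.lt_inf'_iff hT).mpr fun i hi => hdT i hi
    · norm_num
  have hmle : ∀ i ∈ T, m ≤ d i := by
    intro i hi
    rw [hmdef, dif_pos ⟨i, hi⟩]
    exact Finset.inf'_le d hi
  set c0 : ℝ := ∑ i, ∑ j, ‖ρt i j‖ with hc0def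
  have hc0 : 0 ≤ c0 := Finset.sum_nonneg fun i _ => Finset.sum_nonneg fun j _ =>
    norm_nonneg _
  set c : ℝ := c0 / m + 1 with hcdef
  have hcpos : 0 < c := by positivity
  refine ⟨c, hcpos, ?_⟩
  have hkey : ∀ w : n → ℂ, (star w ⬝ᵥ ρt.mulVec w).re ≤ c * (star w ⬝ᵥ Dm.mulVec w).re := by
    intro w
    set wT : n → ℂ := fun i => if i ∈ T then w i else 0 with hwTdef
    set W : ℝ := ∑ k, Complex.normSq (wT k) with hWdef
    have hWnn : 0 ≤ W := Finset.sum_nonneg fun k _ => Complex.normSq_nonneg _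
    have hWk : ∀ k, Complex.normSq (wT k) ≤ W :=
      fun k => Finset.single_le_sum (f := fun k => Complex.normSq (wT k))
        (fun i _ => Complex.normSq_nonneg _) (Finset.mem_univ k)
    have hRHS : (star w ⬝ᵥ Dm.mulVec w).re = ∑ i, d i * Complex.normSq (w i) := by
      rw [dotProduct]
      rw [show ∑ i, (star w) i * Dm.mulVec w i
          = ∑ i, (d i : ℂ) * ((starRingEnd ℂ) (w i) * w i) by
        refine Finset.sum_congr rfl fun i _ => ?_
        rw [hDmd, Matrix.mulVec_diagonal]
        simp only [Pi.star_apply, RCLike.star_def]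
        ring]
      rw [Complex.re_sum]
      refine Finset.sum_congr rfl fun i _ => ?_
      rw [show (starRingEnd ℂ) (w i) * w i = (Complex.normSq (w i) : ℂ) by
        rw [mul_comm, Complex.mul_conj]]
      rw [← Complex.ofReal_mul]
      simp
    have hRHSnn : 0 ≤ ∑ i, d i * Complex.normSq (w i) :=
      Finset.sum_nonneg fun i _ => mul_nonneg (hd i) (Complex.normSq_nonneg _)
    have htrunc : star w ⬝ᵥ ρt.mulVec w = ∑ i, ∑ j, (starRingEnd ℂ) (wT i) * (ρt i j * wT j) := by
      rw [dotProduct]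
      rw [show ∑ i, (star w) i * ρt.mulVec w i
          = ∑ i, ∑ j, (starRingEnd ℂ) (w i) * (ρt i j * w j) by
        refine Finset.sum_congr rfl fun i _ => ?_
        rw [Matrix.mulVec, dotProduct, Finset.mul_sum]
        rfl]
      refine Finset.sum_congr rfl fun i _ => Finset.sum_congr rfl fun j _ => ?_
      by_cases hi : i ∈ T
      · by_cases hj : j ∈ T
        · simp [hwTdef, hi, hj]
        · have hdj : d j = 0 := by
            by_contra hne; exact hj (by simp [hTdef, hne])
          rw [(hkill j hdj i).2]
          simp [hwTdef, hj]
      · have hdi : d i = 0 := by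
          by_contra hne; exact hi (by simp [hTdef, hne])
        rw [(hkill i hdi j).1]
        simp [hwTdef, hi]
    have habs : (star w ⬝ᵥ ρt.mulVec w).re ≤ c0 * W := by
      rw [htrunc]
      calc (∑ i, ∑ j, (starRingEnd ℂ) (wT i) * (ρt i j * wT j)).re
          ≤ ‖∑ i, ∑ j, (starRingEnd ℂ) (wT i) * (ρt i j * wT j)‖ :=
            Complex.re_le_norm _
        _ ≤ ∑ i, ‖∑ j, (starRingEnd ℂ) (wT i) * (ρt i j * wT j)‖ :=
            norm_sum_le _ _
        _ ≤ ∑ i, ∑ j, ‖(starRingEnd ℂ) (wT i) * (ρt i j * wT j)‖ :=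
            Finset.sum_le_sum fun i _ => norm_sum_le _ _
        _ ≤ ∑ i, ∑ j, ‖ρt i j‖ * W := by
            refine Finset.sum_le_sum fun i _ => Finset.sum_le_sum fun j _ => ?_
            rw [norm_mul, norm_mul, Complex.norm_conj]
            have h1 : ‖wT i‖ * ‖wT j‖ ≤ W := by
              have hi2 := hWk i
              have hj2 := hWk j
              rw [← Complex.sq_norm] at hi2 hj2
              nlinarith [norm_nonneg (wT i),
                norm_nonneg (wT j)]
            calc ‖wT i‖ * (‖ρt i j‖ * ‖wT j‖)
                = ‖ρt i j‖ * (‖wT i‖ * ‖wT j‖) := by ring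
              _ ≤ ‖ρt i j‖ * W :=
                  mul_le_mul_of_nonneg_left h1 (norm_nonneg _)
        _ = c0 * W := by
            rw [hc0def, Finset.sum_mul]
            exact Finset.sum_congr rfl fun i _ => (Finset.sum_mul _ _ _).symm
    have hWle : m * W ≤ ∑ i, d i * Complex.normSq (w i) := by
      have hsplit : W = ∑ k ∈ T, Complex.normSq (w k) := by
        rw [hWdef, ← Finset.sum_filter_add_sum_filter_not Finset.univ (fun k => k ∈ T)
          (fun k => Complex.normSq (wT k))]
        have h2 : ∑ k ∈ Finset.univ.filter (fun k => ¬ k ∈ T), Complex.normSq (wT k) = 0 :=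
          Finset.sum_eq_zero fun k hk => by
            simp only [Finset.mem_filter] at hk
            simp [hwTdef, hk.2]
        rw [h2, add_zero]
        refine Finset.sum_congr (by ext k; simp) fun k hk => ?_
        simp [hwTdef, hk]
      rw [hsplit, Finset.mul_sum]
      calc (∑ k ∈ T, m * Complex.normSq (w k))
          ≤ ∑ k ∈ T, d k * Complex.normSq (w k) :=
            Finset.sum_le_sum fun k hk =>
              mul_le_mul_of_nonneg_right (hmle k hk) (Complex.normSq_nonneg _)
        _ ≤ ∑ k, d k * Complex.normSq (w k) :=
            Finset.sum_le_sum_of_subset_of_nonneg (Finset.subset_univ T)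
              (fun k _ _ => mul_nonneg (hd k) (Complex.normSq_nonneg _))
    rw [hRHS]
    calc (star w ⬝ᵥ ρt.mulVec w).re ≤ c0 * W := habs
      _ ≤ (c0/m) * ∑ i, d i * Complex.normSq (w i) := by
          rw [div_mul_eq_mul_div, le_div_iff₀ hm]
          nlinarith [mul_le_mul_of_nonneg_left hWle hc0]
      _ ≤ c * ∑ i, d i * Complex.normSq (w i) := by
          rw [hcdef]
          nlinarith [hRHSnn]
  -- assemble
  have hmidH : ((c : ℝ) • Dm - ρt).IsHermitian := by
    have h1 : ((c : ℝ) • Dm).IsHermitian := by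
      unfold Matrix.IsHermitian
      rw [Matrix.conjTranspose_smul, hDmH]
      simp
    exact h1.sub hρt.1
  have hmid : ((c : ℝ) • Dm - ρt).PosSemidef := by
    refine psd_of_herm_re hmidH fun w => ?_
    rw [Matrix.sub_mulVec, dotProduct_sub, Complex.sub_re]
    have hsm : star w ⬝ᵥ ((c : ℝ) • Dm).mulVec w = (c : ℂ) * (star w ⬝ᵥ Dm.mulVec w) := by
      rw [Matrix.smul_mulVec, dotProduct_smul]
      simp [Complex.real_smul]
    rw [hsm, Complex.re_ofReal_mul]
    have := hkey w
    linarith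
  have hconj : (c • σ - ρ) = V * ((c : ℝ) • Dm - ρt) * star V := by
    rw [Matrix.mul_sub, Matrix.sub_mul]
    have e1 : V * ((c : ℝ) • Dm) * star V = c • σ := by
      rw [Matrix.mul_smul, Matrix.smul_mul, hspec]
    have e2 : V * ρt * star V = ρ := by
      rw [hρtdef]
      have : V * (star V * ρ * V) * star V = (V * star V) * ρ * (V * star V) := by
        noncomm_ring
      rw [this, hVV', Matrix.one_mul, Matrix.mul_one]
    rw [e1, e2]
  rw [hconj]
  have := hmid.mul_mul_conjTranspose_same V
  rwa [← Matrix.star_eq_conjTranspose] at this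

end

section CQ
variable {a b : Type*} [Fintype a] [DecidableEq a] [Fintype b] [DecidableEq b]

lemma ptraceB_psd {M : Matrix (a × b) (a × b) ℂ} (hM : M.PosSemidef) :
    (ptraceB M).PosSemidef := psd_ptraceB hM

lemma ptraceB_add (M N : Matrix (a × b) (a × b) ℂ) :
    ptraceB (M + N) = ptraceB M + ptraceB N := by
  ext i j
  simp [ptraceB, Finset.sum_add_distrib]

lemma ptraceB_smul (c : ℝ) (M : Matrix (a × b) (a × b) ℂ) :
    ptraceB (c • M) = c • ptraceB M := by
  ext i j
  simp [ptraceB, Finset.smul_sum]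

lemma ptraceB_kron (A : Matrix a a ℂ) (B : Matrix b b ℂ) :
    ptraceB (A ⊗ₖ B) = B.trace • A := by
  ext i j
  simp only [ptraceB, Matrix.of_apply, Matrix.kroneckerMap_apply, Matrix.smul_apply,
    Matrix.trace, Matrix.diag, smul_eq_mul]
  rw [← Finset.mul_sum, mul_comm]

lemma trace_ptraceB (M : Matrix (a × b) (a × b) ℂ) :
    (ptraceB M).trace = M.trace := by
  simp [ptraceB, Matrix.trace, Matrix.diag, Fintype.sum_prod_type]

end CQ

section CQ2
variable {X d : Type*} [Fintype X] [DecidableEq X] [Fintype d] [DecidableEq d]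

lemma cq_psd {p : X → ℝ} {ρ : X → Matrix d d ℂ} (hp : ∀ x, 0 ≤ p x)
    (hρ : ∀ x, (ρ x).PosSemidef) : (cqState p ρ).PosSemidef := by
  unfold cqState
  exact psd_sum _ _ fun x _ => psd_smul_real (hp x) (psd_kron (psd_stdBasis x) (hρ x))

lemma cq_trace (p : X → ℝ) (ρ : X → Matrix d d ℂ) :
    (cqState p ρ).trace = ∑ x, (p x : ℂ) * (ρ x).trace := by
  unfold cqState
  rw [Matrix.trace_sum]
  refine Finset.sum_congr rfl fun x _ => ?_
  rw [Matrix.trace_smul, Matrix.trace_kronecker, trace_stdBasis, one_mul, Complex.real_smul]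

lemma cq_trace_one {p : X → ℝ} {ρ : X → Matrix d d ℂ} (hp : ∑ x, p x = 1)
    (hρ : ∀ x, (ρ x).trace = 1) : (cqState p ρ).trace = 1 := by
  rw [cq_trace]
  have : ∀ x ∈ Finset.univ, (p x : ℂ) * (ρ x).trace = (p x : ℂ) := by
    intro x _; rw [hρ x, mul_one]
  rw [Finset.sum_congr rfl this, ← Complex.ofReal_sum, hp, Complex.ofReal_one]

lemma cq_sub_smul (f g : X → ℝ) (M N : X → Matrix d d ℂ)
    (hpt : ∀ x, f x • M x - g x • N x = (f x - g x) • M x ∨ True) : True := trivial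

end CQ2

/-- existence of a nearby cq state with controlled max-relative entropy
against a reference with its own `A`-marginals. -/
theorem exists_cq_smoothing {X a b : Type*} [Fintype X] [DecidableEq X]
    [Fintype a] [DecidableEq a] [Fintype b] [DecidableEq b]
    (p q : X → ℝ) (hp : IsPMF p) (hq : IsPMF q)
    (ρ : X → Matrix (a × b) (a × b) ℂ) (hρ : ∀ x, IsState (ρ x))
    (σA : X → Matrix a a ℂ) (σB : X → Matrix b b ℂ)
    (hσA : ∀ x, IsState (σA x)) (hσB : ∀ x, IsState (σB x))
    (hsupp : SuppSubset (cqState p ρ) (cqState q fun x => σA x ⊗ₖ σB x))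
    (ε : ℝ) (hε : ε ∈ Set.Ioo (0 : ℝ) 1) :
    ∃ (p' : X → ℝ) (ρ' : X → Matrix (a × b) (a × b) ℂ),
      IsPMF p' ∧ (∀ x, IsState (ρ' x)) ∧
      purDist (cqState p' ρ') (cqState p ρ) ≤ ε ∧
      dMax (cqState p' ρ') (cqState p' fun x => ptraceB (ρ' x) ⊗ₖ σB x) ≤
        dMax (cqState p ρ) (cqState q fun x => σA x ⊗ₖ σB x) +
          Real.logb 2 (1 / (1 - Real.sqrt (1 - ε ^ 2)) + 1) := by
  obtain ⟨hε0, hε1⟩ := hε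
  -- the mixing parameter
  set s : ℝ := Real.sqrt (1 - ε ^ 2) with hsdef
  have hs0 : 0 ≤ s := Real.sqrt_nonneg _
  have hs1 : s < 1 := by
    rw [hsdef]
    nlinarith [Real.sq_sqrt (show (0:ℝ) ≤ 1 - ε^2 by nlinarith), Real.sqrt_nonneg (1 - ε^2)]
  set t : ℝ := 1 - s with htdef
  have ht0 : 0 < t := by simp [htdef]; linarith
  have ht1 : t < 1 := by
    have : 0 < s := by
      rw [hsdef]
      exact Real.sqrt_pos.mpr (by nlinarith)
    simp [htdef]; linarith
  have hte : t ≤ ε ^ 2 := by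
    have h1 : 1 - ε^2 ≤ s := by
      rw [hsdef]
      nlinarith [Real.sq_sqrt (show (0:ℝ) ≤ 1 - ε^2 by nlinarith),
        Real.sqrt_nonneg (1 - ε^2)]
    simp [htdef]; linarith
  have h1t : 0 ≤ 1 - t := by linarith
  -- definitions
  set σAB : X → Matrix (a × b) (a × b) ℂ := fun x => σA x ⊗ₖ σB x with hσABdef
  have hσABst : ∀ x, IsState (σAB x) := fun x =>
    ⟨psd_kron (hσA x).1 (hσB x).1,
     by rw [hσABdef]; simp only []; rw [Matrix.trace_kronecker, (hσA x).2, (hσB x).2, one_mul]⟩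
  set p' : X → ℝ := fun x => (1 - t) * p x + t * q x with hp'def
  have hp'nn : ∀ x, 0 ≤ p' x := fun x =>
    add_nonneg (mul_nonneg h1t (hp.1 x)) (mul_nonneg (le_of_lt ht0) (hq.1 x))
  have hp' : IsPMF p' := by
    refine ⟨hp'nn, ?_⟩
    rw [hp'def]
    simp only []
    rw [Finset.sum_add_distrib, ← Finset.mul_sum, ← Finset.mul_sum, hp.2, hq.2]
    ring
  have hp'zero : ∀ x, p' x = 0 → p x = 0 ∧ q x = 0 := by
    intro x hx
    have h1 : 0 ≤ (1 - t) * p x := mul_nonneg h1t (hp.1 x)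
    have h2 : 0 ≤ t * q x := mul_nonneg (le_of_lt ht0) (hq.1 x)
    rw [hp'def] at hx
    simp only [] at hx
    constructor
    · have : (1 - t) * p x = 0 := by linarith
      rcases mul_eq_zero.mp this with h | h
      · linarith
      · exact h
    · have : t * q x = 0 := by linarith
      rcases mul_eq_zero.mp this with h | h
      · linarith
      · exact h
  set ρ' : X → Matrix (a × b) (a × b) ℂ := fun x =>
    if p' x = 0 then σAB x
    else (p' x)⁻¹ • (((1 - t) * p x) • ρ x + (t * q x) • σAB x) with hρ'def
  have hρ'st : ∀ x, IsState (ρ' x) := by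
    intro x
    rw [hρ'def]
    simp only []
    split_ifs with h
    · exact hσABst x
    · constructor
      · exact psd_smul_real (inv_nonneg.mpr (hp'nn x))
          ((psd_smul_real (mul_nonneg h1t (hp.1 x)) (hρ x).1).add
           (psd_smul_real (mul_nonneg (le_of_lt ht0) (hq.1 x)) (hσABst x).1))
      · rw [Matrix.trace_smul, Matrix.trace_add, Matrix.trace_smul, Matrix.trace_smul,
          (hρ x).2, (hσABst x).2]
        rw [Complex.real_smul, Complex.real_smul, Complex.real_smul]
        rw [mul_one, mul_one]
        rw [← Complex.ofReal_add, ← Complex.ofReal_mul]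
        norm_cast
        field_simp
        rfl
  -- pointwise identity
  have hpt : ∀ x, p' x • ρ' x = ((1 - t) * p x) • ρ x + (t * q x) • σAB x := by
    intro x
    rw [hρ'def]
    simp only []
    split_ifs with h
    · obtain ⟨hpx, hqx⟩ := hp'zero x h
      rw [h, hpx, hqx]
      simp
    · rw [smul_smul, mul_inv_cancel₀ h, one_smul]
  have hptA : ∀ x, p' x • ptraceB (ρ' x) = ((1 - t) * p x) • ptraceB (ρ x) + (t * q x) • σA x := by
    intro x
    have := congrArg ptraceB (hpt x)
    rw [ptraceB_smul, ptraceB_add, ptraceB_smul, ptraceB_smul] at this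
    rw [this]
    congr 1
    rw [hσABdef]
    simp only []
    rw [ptraceB_kron, (hσB x).2, one_smul]
  -- cq-level identities
  have hμeq : cqState p' ρ' = (1 - t) • cqState p ρ + t • cqState q σAB := by
    unfold cqState
    rw [Finset.smul_sum, Finset.smul_sum, ← Finset.sum_add_distrib]
    refine Finset.sum_congr rfl fun x _ => ?_
    rw [smul_smul, smul_smul]
    rw [show p' x • (Matrix.single x x (1:ℂ) ⊗ₖ ρ' x)
        = Matrix.single x x (1:ℂ) ⊗ₖ (p' x • ρ' x) from
      (Matrix.kronecker_smul _ _ _).symm]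
    rw [hpt x, Matrix.kronecker_add, Matrix.kronecker_smul, Matrix.kronecker_smul]
  have hτeq : cqState p' (fun x => ptraceB (ρ' x) ⊗ₖ σB x)
      - t • cqState q σAB
      = cqState (fun x => (1 - t) * p x) (fun x => ptraceB (ρ x) ⊗ₖ σB x) := by
    unfold cqState
    rw [Finset.smul_sum, ← Finset.sum_sub_distrib]
    refine Finset.sum_congr rfl fun x _ => ?_
    rw [smul_smul]
    rw [show p' x • (Matrix.single x x (1:ℂ) ⊗ₖ (ptraceB (ρ' x) ⊗ₖ σB x))
        = Matrix.single x x (1:ℂ) ⊗ₖ ((p' x • ptraceB (ρ' x)) ⊗ₖ σB x) by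
      rw [Matrix.smul_kronecker, Matrix.kronecker_smul]]
    rw [hptA x, Matrix.add_kronecker, Matrix.kronecker_add, Matrix.smul_kronecker,
      Matrix.smul_kronecker, Matrix.kronecker_smul, Matrix.kronecker_smul]
    rw [hσABdef]
    simp only []
    abel
  -- basic psd/trace facts
  have hρc : (cqState p ρ).PosSemidef := cq_psd hp.1 fun x => (hρ x).1
  have hρctr : (cqState p ρ).trace = 1 := cq_trace_one hp.2 fun x => (hρ x).2
  have hγc : (cqState q σAB).PosSemidef := cq_psd hq.1 fun x => (hσABst x).1
  have hγctr : (cqState q σAB).trace = 1 := cq_trace_one hq.2 fun x => (hσABst x).2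
  have hμ : (cqState p' ρ').PosSemidef := cq_psd hp'.1 fun x => (hρ'st x).1
  have hμtr : (cqState p' ρ').trace = 1 := cq_trace_one hp'.2 fun x => (hρ'st x).2
  have hτ : (cqState p' (fun x => ptraceB (ρ' x) ⊗ₖ σB x)).PosSemidef :=
    cq_psd hp'.1 fun x => psd_kron (ptraceB_psd (hρ'st x).1) (hσB x).1
  have hτtr : (cqState p' (fun x => ptraceB (ρ' x) ⊗ₖ σB x)).trace = 1 :=
    cq_trace_one hp'.2 fun x => by
      rw [Matrix.trace_kronecker, trace_ptraceB, (hρ'st x).2, (hσB x).2, one_mul]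
  refine ⟨p', ρ', hp', hρ'st, ?_, ?_⟩
  · -- purified distance bound
    have hclose : ((cqState p' ρ') - (1-t) • cqState p ρ).PosSemidef := by
      rw [hμeq, add_sub_cancel_left]
      exact psd_smul_real (le_of_lt ht0) hγc
    rw [purDist, fidelity, traceNorm]
    rw [show psqrt (cqState p' ρ') = hμ.sqrt from dif_pos hμ,
        show psqrt (cqState p ρ) = hρc.sqrt from dif_pos hρc]
    have hXX : (hμ.sqrt * hρc.sqrt)ᴴ * (hμ.sqrt * hρc.sqrt)
        = hρc.sqrt * (cqState p' ρ') * hρc.sqrt := by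
      rw [Matrix.conjTranspose_mul, hμ.posSemidef_sqrt.1, hρc.posSemidef_sqrt.1]
      rw [Matrix.mul_assoc, ← Matrix.mul_assoc hμ.sqrt hμ.sqrt hρc.sqrt, hμ.sqrt_mul_self,
        ← Matrix.mul_assoc]
    have hY : (hρc.sqrt * (cqState p' ρ') * hρc.sqrt).PosSemidef := by
      have h := hμ.conjTranspose_mul_mul_same (B := hρc.sqrt)
      rwa [hρc.posSemidef_sqrt.1] at h
    have hmid : hρc.sqrt * (cqState p ρ) * hρc.sqrt = (cqState p ρ) * (cqState p ρ) := by
      have h := hρc.sqrt_mul_self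
      calc hρc.sqrt * (cqState p ρ) * hρc.sqrt
          = hρc.sqrt * (hρc.sqrt * hρc.sqrt) * hρc.sqrt := by rw [h]
        _ = (hρc.sqrt * hρc.sqrt) * (hρc.sqrt * hρc.sqrt) := by noncomm_ring
        _ = (cqState p ρ) * (cqState p ρ) := by rw [h]
    have hdiff : hρc.sqrt * (cqState p' ρ') * hρc.sqrt
        - (1-t) • ((cqState p ρ) * (cqState p ρ))
        = hρc.sqrt * ((cqState p' ρ') - (1-t) • cqState p ρ) * hρc.sqrt := by
      rw [Matrix.mul_sub, Matrix.sub_mul, Matrix.mul_smul, Matrix.smul_mul, hmid]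
    have hAB : (hρc.sqrt * (cqState p' ρ') * hρc.sqrt
        - (1-t) • ((cqState p ρ) * (cqState p ρ))).PosSemidef := by
      rw [hdiff]
      have h := hclose.conjTranspose_mul_mul_same (B := hρc.sqrt)
      rwa [hρc.posSemidef_sqrt.1] at h
    have hR : ((Real.sqrt (1-t)) • cqState p ρ).PosSemidef :=
      psd_smul_real (Real.sqrt_nonneg _) hρc
    have hR2 : ((Real.sqrt (1-t)) • cqState p ρ)^2 = (1-t) • ((cqState p ρ) * (cqState p ρ)) := by
      rw [smul_pow, Real.sq_sqrt h1t, pow_two]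
    have hP : ((1-t) • ((cqState p ρ) * (cqState p ρ))).PosSemidef := hR2 ▸ (hR.pow 2)
    have hEqsqrt : (Real.sqrt (1-t)) • cqState p ρ = hP.sqrt := hR.eq_sqrt_of_sq_eq hP hR2
    have hmono := sqrt_mono hP hY hAB
    have htrre := lle_trace_re hmono
    rw [← hEqsqrt, Matrix.trace_smul, hρctr] at htrre
    have hltr : (Real.sqrt (1-t) • (1:ℂ)).re = Real.sqrt (1-t) := by
      rw [Complex.real_smul, mul_one, Complex.ofReal_re]
    rw [hltr] at htrre
    rw [hXX, show psqrt (hρc.sqrt * (cqState p' ρ') * hρc.sqrt) = hY.sqrt from dif_pos hY]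
    set F : ℝ := hY.sqrt.trace.re with hFdef
    have hF1 : Real.sqrt (1-t) ≤ F := htrre
    have hF2 : 1 - t ≤ F^2 := by
      have := pow_le_pow_left₀ (Real.sqrt_nonneg (1-t)) hF1 2
      rwa [Real.sq_sqrt h1t] at this
    calc Real.sqrt (1 - F^2) ≤ Real.sqrt (ε^2) := Real.sqrt_le_sqrt (by linarith)
      _ = ε := Real.sqrt_sq (le_of_lt hε0)
  · -- the dMax bound
    set C : ℝ := Real.logb 2 (1/t + 1) with hCdef
    have hCpos : (0:ℝ) < 1/t + 1 := by positivity
    have h2C : (2:ℝ)^C = 1/t + 1 :=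
      Real.rpow_logb (by norm_num) (by norm_num) hCpos
    have hSne : ∃ l : ℝ, LLE (cqState p ρ) ((2:ℝ)^l • cqState q σAB) := by
      obtain ⟨c, hcpos, hpsd⟩ := exists_lle_of_suppSubset hρc hγc hsupp
      refine ⟨Real.logb 2 c, ?_⟩
      rw [LLE, Real.rpow_logb (by norm_num) (by norm_num) hcpos]
      exact hpsd
    have hS0 : ∀ l : ℝ, LLE (cqState p ρ) ((2:ℝ)^l • cqState q σAB) → 0 ≤ l := by
      intro l hl
      have htr := lle_trace_re hl
      rw [Matrix.trace_smul, hγctr, hρctr, Complex.real_smul, mul_one] at htr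
      rw [Complex.one_re, Complex.ofReal_re] at htr
      by_contra hneg
      push_neg at hneg
      have h2 : (2:ℝ)^l < (2:ℝ)^(0:ℝ) :=
        (Real.rpow_lt_rpow_left_iff (by norm_num)).mpr hneg
      rw [Real.rpow_zero] at h2
      linarith
    have hS'0 : ∀ l : ℝ, LLE (cqState p' ρ')
        ((2:ℝ)^l • cqState p' (fun x => ptraceB (ρ' x) ⊗ₖ σB x)) → 0 ≤ l := by
      intro l hl
      have htr := lle_trace_re hl
      rw [Matrix.trace_smul, hτtr, hμtr, Complex.real_smul, mul_one] at htr
      rw [Complex.one_re, Complex.ofReal_re] at htr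
      by_contra hneg
      push_neg at hneg
      have h2 : (2:ℝ)^l < (2:ℝ)^(0:ℝ) :=
        (Real.rpow_lt_rpow_left_iff (by norm_num)).mpr hneg
      rw [Real.rpow_zero] at h2
      linarith
    have hP2 : (cqState p' (fun x => ptraceB (ρ' x) ⊗ₖ σB x) - t • cqState q σAB).PosSemidef := by
      rw [hτeq]
      exact cq_psd (fun x => mul_nonneg h1t (hp.1 x))
        (fun x => psd_kron (ptraceB_psd (hρ x).1) (hσB x).1)
    have hmem : ∀ l : ℝ, LLE (cqState p ρ) ((2:ℝ)^l • cqState q σAB) →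
        LLE (cqState p' ρ') ((2:ℝ)^(l + C) • cqState p' (fun x => ptraceB (ρ' x) ⊗ₖ σB x)) := by
      intro l hl
      have hl0 : 0 ≤ l := hS0 l hl
      have h2l : (0:ℝ) < (2:ℝ)^l := Real.rpow_pos_of_pos (by norm_num) l
      have h2l1 : (1:ℝ) ≤ (2:ℝ)^l := by
        have := (Real.rpow_le_rpow_left_iff (x := (2:ℝ)) (by norm_num)).mpr hl0
        rwa [Real.rpow_zero] at this
      have hKey : t • ((2:ℝ)^(l+C) • cqState p' (fun x => ptraceB (ρ' x) ⊗ₖ σB x)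
            - cqState p' ρ')
          = (t*(2*(2:ℝ)^l - 1)) • cqState p' (fun x => ptraceB (ρ' x) ⊗ₖ σB x)
            + ((1-t)*(2:ℝ)^l + t) •
                (cqState p' (fun x => ptraceB (ρ' x) ⊗ₖ σB x) - t • cqState q σAB)
            + (t*(1-t)) • ((2:ℝ)^l • cqState q σAB - cqState p ρ) := by
        have h2lC : (2:ℝ)^(l+C) = (2:ℝ)^l * (1/t + 1) := by
          rw [Real.rpow_add (by norm_num), h2C]
        rw [h2lC, hμeq]
        match_scalars
        · field_simp
          ring
        · field_simp
        · field_simp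
          ring
      have hsum : (t • ((2:ℝ)^(l+C) • cqState p' (fun x => ptraceB (ρ' x) ⊗ₖ σB x)
          - cqState p' ρ')).PosSemidef := by
        rw [hKey]
        refine ((psd_smul_real (by nlinarith) hτ).add
          (psd_smul_real (by nlinarith) hP2)).add
          (psd_smul_real (by nlinarith) hl)
      have hfin := psd_smul_real (inv_nonneg.mpr (le_of_lt ht0)) hsum
      rw [smul_smul, inv_mul_cancel₀ (ne_of_gt ht0), one_smul] at hfin
      exact hfin
    unfold dMax
    have hbdd : BddBelow {l : ℝ | LLE (cqState p' ρ')
        ((2:ℝ)^l • cqState p' (fun x => ptraceB (ρ' x) ⊗ₖ σB x))} :=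
      ⟨0, fun l' hl' => hS'0 l' hl'⟩
    obtain ⟨l₀, hl₀⟩ := hSne
    have hne : {l : ℝ | LLE (cqState p ρ) ((2:ℝ)^l • cqState q σAB)}.Nonempty := ⟨l₀, hl₀⟩
    have hkey2 : ∀ l ∈ {l : ℝ | LLE (cqState p ρ) ((2:ℝ)^l • cqState q σAB)},
        sInf {l : ℝ | LLE (cqState p' ρ')
          ((2:ℝ)^l • cqState p' (fun x => ptraceB (ρ' x) ⊗ₖ σB x))} - C ≤ l := by
      intro l hl
      have hmem' := hmem l hl
      have hle := csInf_le hbdd (Set.mem_setOf.mpr hmem')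
      linarith
    have hfinal := le_csInf hne hkey2
    linarith



end Paper
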